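/- Let $\alpha > 0$, $\bm{z} \in (0,\infty)^d$, $F \in (0,1)$, and define $g(\bm{x})$ as in the Kolmogorov Stein solution: $g(\bm{x}) = \alpha M(\bm{x}) F - F \int_{\alpha M(\bm{x})}^\infty (F^{-e^{-t}} - 1)\,dt$ with $M(\bm{x}) = (\max_j \log(x^j/z^j))_+$. Then $g$ is $(\alpha/z^*)$-Lipschitz on $\mathbb{R}_+^d$ with respect to the $\ell^1$ norm, where $z^* = \min_j z^j$. -/

import Mathlib

open MeasureTheory Set

/-- The Kolmogorov Stein solution `g` is `(α / z*)`-Lipschitz on `ℝ₊^d` for the `ℓ¹`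
norm, where `z* = min_j z^j`. -/
theorem stmt_19 (d : ℕ) (hd : 0 < d) (α : ℝ) (hα : 0 < α)
    (z : Fin d → ℝ) (hz : ∀ j, 0 < z j) (F : ℝ) (hF0 : 0 < F) (hF1 : F < 1)
    (M : (Fin d → ℝ) → ℝ) (hM : ∀ x, M x = max (⨆ j, Real.log (x j / z j)) 0)
    (g : (Fin d → ℝ) → ℝ)
    (hg : ∀ x, g x = α * M x * F
        - F * ∫ t in Ioi (α * M x), (F ^ (-Real.exp (-t)) - 1)) :
    ∀ x y : Fin d → ℝ, (∀ j, 0 ≤ x j) → (∀ j, 0 ≤ y j) →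
      |g x - g y| ≤ α / (⨅ j, z j) * ∑ j, |x j - y j| := by
  haveI : Nonempty (Fin d) := Fin.pos_iff_nonempty.mp hd
  set c : ℝ := -Real.log F with hc
  have hc0 : 0 < c := by
    have := Real.log_neg hF0 hF1; simp only [hc]; linarith
  -- rewrite the integrand in exponential form
  have hfun : (fun t : ℝ => F ^ (-Real.exp (-t)) - 1)
      = fun t : ℝ => Real.exp (c * Real.exp (-t)) - 1 := by
    funext t
    rw [Real.rpow_def_of_pos hF0]
    congr 1
    congr 1
    simp only [hc]; ring
  have hg' : ∀ u, g u = α * M u * F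
      - F * ∫ t in Ioi (α * M u), (Real.exp (c * Real.exp (-t)) - 1) := by
    intro u; rw [hg u, hfun]
  set f : ℝ → ℝ := fun t => Real.exp (c * Real.exp (-t)) - 1 with hf
  have hcont : Continuous f := by
    simp only [hf]; continuity
  have hfnn : ∀ t, 0 ≤ f t := by
    intro t
    have : (1:ℝ) ≤ Real.exp (c * Real.exp (-t)) := Real.one_le_exp (by positivity)
    simp only [hf]; linarith
  -- integrability on Ioi s for s ≥ 0
  have hint : ∀ s : ℝ, 0 ≤ s → IntegrableOn f (Ioi s) := by
    intro s hs
    apply Integrable.mono' (((exp_neg_integrableOn_Ioi s one_pos)).const_mul (c * Real.exp c))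
    · exact hcont.aestronglyMeasurable.restrict
    · filter_upwards [ae_restrict_mem measurableSet_Ioi] with t ht
      have ht0 : 0 ≤ t := le_trans hs ht.le
      set u : ℝ := c * Real.exp (-t) with hu
      have hu0 : 0 ≤ u := by positivity
      have hexp1 : Real.exp (-t) ≤ 1 := Real.exp_le_one_iff.2 (by linarith)
      have huc : u ≤ c := by
        simp only [hu]; nlinarith
      have h2 : Real.exp (-u) * Real.exp u = 1 := by
        rw [← Real.exp_add]; simp
      have h1 : Real.exp u - 1 ≤ u * Real.exp u := by
        nlinarith [Real.add_one_le_exp (-u), Real.exp_pos u]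
      have h3 : u * Real.exp u ≤ u * Real.exp c :=
        mul_le_mul_of_nonneg_left (Real.exp_le_exp.2 huc) hu0
      rw [Real.norm_eq_abs, abs_of_nonneg (hfnn t)]
      calc f t ≤ u * Real.exp u := by simp only [hf]; exact h1
        _ ≤ u * Real.exp c := h3
        _ = c * Real.exp c * Real.exp (-1 * t) := by
            simp only [hu, neg_one_mul]; ring
  -- one-sided Lipschitz bound for the 1-d profile
  have hprof : ∀ u v : Fin d → ℝ, M v ≤ M u →
      0 ≤ g u - g v ∧ g u - g v ≤ α * (M u - M v) := by
    intro u v huv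
    have hMv0 : 0 ≤ M v := by rw [hM v]; exact le_max_right _ _
    have hMu0 : 0 ≤ M u := le_trans hMv0 huv
    set s' : ℝ := α * M v with hs'
    set s : ℝ := α * M u with hsdef
    have hs'0 : 0 ≤ s' := by positivity
    have hss : s' ≤ s := by
      simp only [hs', hsdef]
      exact mul_le_mul_of_nonneg_left huv hα.le
    have hs0 : 0 ≤ s := le_trans hs'0 hss
    have hsplit : ∫ t in Ioi s', f t = (∫ t in Ioc s' s, f t) + ∫ t in Ioi s, f t := by
      rw [← setIntegral_union (Ioc_disjoint_Ioi le_rfl) measurableSet_Ioi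
          hcont.integrableOn_Ioc (hint s hs0), Ioc_union_Ioi_eq_Ioi hss]
    have hI0 : 0 ≤ ∫ t in Ioc s' s, f t :=
      setIntegral_nonneg measurableSet_Ioc fun t _ => hfnn t
    have hIup : ∫ t in Ioc s' s, f t ≤ (F⁻¹ - 1) * (s - s') := by
      have hbd : ∀ t ∈ Ioc s' s, f t ≤ F⁻¹ - 1 := by
        intro t ht
        have ht0 : 0 ≤ t := le_trans hs'0 ht.1.le
        have hexp1 : Real.exp (-t) ≤ 1 := Real.exp_le_one_iff.2 (by linarith)
        have h4 : c * Real.exp (-t) ≤ c := by nlinarith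
        have h5 : Real.exp (c * Real.exp (-t)) ≤ Real.exp c := Real.exp_le_exp.2 h4
        have h6 : Real.exp c = F⁻¹ := by
          rw [hc, Real.exp_neg, Real.exp_log hF0]
        simp only [hf]; rw [← h6]; linarith
      calc ∫ t in Ioc s' s, f t ≤ ∫ _t in Ioc s' s, (F⁻¹ - 1) :=
            setIntegral_mono_on hcont.integrableOn_Ioc (integrableOn_const (by
              rw [Real.volume_Ioc]; exact ENNReal.ofReal_ne_top)) measurableSet_Ioc hbd
        _ = (F⁻¹ - 1) * (s - s') := by
            rw [setIntegral_const, measureReal_def, Real.volume_Ioc, ENNReal.toReal_ofReal (by linarith)]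
            simp [mul_comm]
    have hFinv : F * F⁻¹ = 1 := mul_inv_cancel₀ hF0.ne'
    have hdiff : g u - g v = (s - s') * F + F * ∫ t in Ioc s' s, f t := by
      rw [hg' u, hg' v, ← hsdef, ← hs', hsplit]; ring
    constructor
    · rw [hdiff]; nlinarith
    · rw [hdiff]
      have : α * (M u - M v) = s - s' := by simp only [hsdef, hs']; ring
      rw [this]
      nlinarith
  -- one-sided bound on M
  have zstar_le : ∀ j, (⨅ j, z j) ≤ z j := fun j => ciInf_le (Finite.bddBelow_range z) j
  have zstar_pos : 0 < ⨅ j, z j := by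
    obtain ⟨j0, hj0⟩ := Finite.exists_min z
    exact lt_of_lt_of_le (hz j0) (le_ciInf hj0)
  have hMb : ∀ u v : Fin d → ℝ, (∀ j, 0 ≤ u j) → (∀ j, 0 ≤ v j) →
      M u - M v ≤ (⨅ j, z j)⁻¹ * ∑ j, |u j - v j| := by
    intro u v hu hv
    have hRHS : 0 ≤ (⨅ j, z j)⁻¹ * ∑ j, |u j - v j| := by positivity
    rw [hM u, hM v]
    rcases le_or_gt (⨆ j, Real.log (u j / z j)) 0 with h | h
    · rw [max_eq_right h]
      have hvge : (0:ℝ) ≤ max (⨆ j, Real.log (v j / z j)) 0 := le_max_right _ _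
      linarith
    · rw [max_eq_left h.le]
      obtain ⟨j0, hj0⟩ := Finite.exists_max (fun j => Real.log (u j / z j))
      have hsup : (⨆ j, Real.log (u j / z j)) = Real.log (u j0 / z j0) :=
        by
        apply le_antisymm (ciSup_le hj0)
        exact le_ciSup (Finite.bddAbove_range fun j => Real.log (u j / z j)) j0
      rw [hsup]
      rw [hsup] at h
      have harg : 1 < u j0 / z j0 := by
        by_contra hle
        push_neg at hle
        have := Real.log_nonpos (div_nonneg (hu j0) (hz j0).le) hle
        linarith
      have hzu : z j0 < u j0 := by
        have := (one_lt_div (hz j0)).mp harg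
        linarith
      have hu0 : 0 < u j0 := lt_trans (hz j0) hzu
      set b : ℝ := max (v j0) (z j0) with hb
      have hb0 : 0 < b := lt_of_lt_of_le (hz j0) (le_max_right _ _)
      have hMv : Real.log (b / z j0) ≤ max (⨆ j, Real.log (v j / z j)) 0 := by
        rcases le_total (z j0) (v j0) with hcmp | hcmp
        · rw [hb, max_eq_left hcmp]
          refine le_trans ?_ (le_max_left _ _)
          exact le_ciSup (Finite.bddAbove_range fun j => Real.log (v j / z j)) j0
        · rw [hb, max_eq_right hcmp, div_self (hz j0).ne', Real.log_one]
          exact le_max_right _ _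
      have key : Real.log (u j0 / z j0) - Real.log (b / z j0)
          ≤ (⨅ j, z j)⁻¹ * |u j0 - v j0| := by
        have hlog : Real.log (u j0 / z j0) - Real.log (b / z j0)
            = Real.log (u j0 / b) := by
          rw [Real.log_div hu0.ne' (hz j0).ne', Real.log_div hb0.ne' (hz j0).ne',
              Real.log_div hu0.ne' hb0.ne']
          ring
        rw [hlog]
        rcases le_or_gt (u j0) b with hub | hub
        · have h1 : Real.log (u j0 / b) ≤ 0 :=
            Real.log_nonpos (by positivity) (by
              rw [div_le_one hb0]; exact hub)
          have : (0:ℝ) ≤ (⨅ j, z j)⁻¹ * |u j0 - v j0| := by positivity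
          linarith
        · have h1 : Real.log (u j0 / b) ≤ u j0 / b - 1 :=
            Real.log_le_sub_one_of_pos (by positivity)
          have h2 : u j0 / b - 1 = (u j0 - b) / b := by field_simp
          have h3 : u j0 - b ≤ |u j0 - v j0| :=
            le_trans (by
              have : v j0 ≤ b := le_max_left _ _
              have h4 : u j0 - b ≤ u j0 - v j0 := by linarith
              linarith [le_abs_self (u j0 - v j0)]) le_rfl
          have h5 : (⨅ j, z j) ≤ b := le_trans (zstar_le j0) (le_max_right _ _)
          have h6 : (u j0 - b) / b ≤ |u j0 - v j0| / (⨅ j, z j) :=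
            div_le_div₀ (abs_nonneg _) h3 zstar_pos h5
          have h7 : |u j0 - v j0| / (⨅ j, z j) = (⨅ j, z j)⁻¹ * |u j0 - v j0| :=
            div_eq_inv_mul _ _
          have h8 : (u j0 - b) / b = b⁻¹ * (u j0 - b) := div_eq_inv_mul _ _
          linarith
      have hsum : |u j0 - v j0| ≤ ∑ j, |u j - v j| :=
        Finset.single_le_sum (f := fun j => |u j - v j|) (fun j _ => abs_nonneg _) (Finset.mem_univ j0)
      have hfin : (⨅ j, z j)⁻¹ * |u j0 - v j0| ≤ (⨅ j, z j)⁻¹ * ∑ j, |u j - v j| :=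
        mul_le_mul_of_nonneg_left hsum (by positivity)
      linarith
  -- conclude
  intro x y hxp hyp
  have habs : |M x - M y| ≤ (⨅ j, z j)⁻¹ * ∑ j, |x j - y j| := by
    rw [abs_le]
    constructor
    · have := hMb y x hyp hxp
      have hcomm : (∑ j, |y j - x j|) = ∑ j, |x j - y j| := by
        apply Finset.sum_congr rfl
        intro j _
        exact abs_sub_comm _ _
      rw [hcomm] at this
      linarith
    · exact hMb x y hxp hyp
  have hgabs : |g x - g y| ≤ α * |M x - M y| := by
    rcases le_total (M y) (M x) with hc1 | hc1
    · obtain ⟨h1, h2⟩ := hprof x y hc1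
      rw [abs_of_nonneg h1, abs_of_nonneg (by linarith : (0:ℝ) ≤ M x - M y)]
      exact h2
    · obtain ⟨h1, h2⟩ := hprof y x hc1
      rw [abs_sub_comm, abs_of_nonneg h1, abs_sub_comm (M x) (M y),
          abs_of_nonneg (by linarith : (0:ℝ) ≤ M y - M x)]
      exact h2
  calc |g x - g y| ≤ α * |M x - M y| := hgabs
    _ ≤ α * ((⨅ j, z j)⁻¹ * ∑ j, |x j - y j|) :=
        mul_le_mul_of_nonneg_left habs hα.le
    _ = α / (⨅ j, z j) * ∑ j, |x j - y j| := by
        rw [div_eq_mul_inv]; ring
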